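/- Lemma 1 (total variation bound on the higher-order remainder): suppose there exists C > 0 such that ν(s) ≥ C for all s ∈ S. Then there exists a constant c* > 0, depending only on γ, R_max and C, such that for all policies π_old, π_new: |η₂(π_new, π_old)| ≤ (c* γ/(1−γ)) · [Σ_{s∈S} d^{π_old,ν}(s) D_TV(π_old(·|s), π_new(·|s))]². -/

import Mathlib

namespace VEPO

variable {S A : Type} [Fintype S] [Fintype A] [DecidableEq S] [DecidableEq A]

/-- A probability mass function on a finite type, represented as a real-valued function. -/
def IsPMF {X : Type} [Fintype X] (f : X → ℝ) : Prop :=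
  (∀ x, 0 ≤ f x) ∧ ∑ x : X, f x = 1

/-- A transition kernel: for each action-state pair `(a, s)`, a pmf `p a s` on next states. -/
def IsKernel (p : A → S → S → ℝ) : Prop := ∀ a s, IsPMF (p a s)

/-- A policy: for each state `s`, a pmf `π s` on actions. -/
def IsPolicy (π : S → A → ℝ) : Prop := ∀ s, IsPMF (π s)

/-- The `t`-step visitation probability `p_t^π(s' | a, s)`. -/
def visit (p : A → S → S → ℝ) (π : S → A → ℝ) : ℕ → A → S → S → ℝ
  | 0, _, s, s' => if s' = s then 1 else 0
  | 1, a, s, s' => p a s s'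
  | (t + 2), a, s, s' =>
      ∑ s'' : S, visit p π (t + 1) a s s'' * ∑ a'' : A, π s'' a'' * p a'' s'' s'

/-- The Q-function `Q^π(a, s)`. -/
noncomputable def Qfun (p : A → S → S → ℝ) (r : S → A → ℝ) (γ : ℝ)
    (π : S → A → ℝ) (a : A) (s : S) : ℝ :=
  r s a + ∑' t : ℕ, γ ^ (t + 1) *
    ∑ s' : S, visit p π (t + 1) a s s' * ∑ a' : A, π s' a' * r s' a'

/-- The value function `V^π(s)`. -/
noncomputable def Vfun (p : A → S → S → ℝ) (r : S → A → ℝ) (γ : ℝ)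
    (π : S → A → ℝ) (s : S) : ℝ :=
  ∑ a : A, π s a * Qfun p r γ π a s

/-- The advantage function `A^π(a, s)`. -/
noncomputable def Adv (p : A → S → S → ℝ) (r : S → A → ℝ) (γ : ℝ)
    (π : S → A → ℝ) (a : A) (s : S) : ℝ :=
  Qfun p r γ π a s - Vfun p r γ π s

/-- The conditional discounted visitation probability `d^π(s' | a, s)`. -/
noncomputable def dvisit (p : A → S → S → ℝ) (γ : ℝ) (π : S → A → ℝ)
    (s' : S) (a : A) (s : S) : ℝ :=
  (1 - γ) * ∑' t : ℕ, γ ^ t * visit p π t a s s'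

/-- The integrated discounted visitation probability `d^{π,ν}(s')`. -/
noncomputable def dnu (p : A → S → S → ℝ) (γ : ℝ) (ν : S → ℝ)
    (π : S → A → ℝ) (s' : S) : ℝ :=
  ∑ s : S, ∑ a : A, π s a * ν s * dvisit p γ π s' a s

/-- The integrated value `V(π) = Σ_s ν(s) V^π(s)`. -/
noncomputable def IntV (p : A → S → S → ℝ) (r : S → A → ℝ) (γ : ℝ) (ν : S → ℝ)
    (π : S → A → ℝ) : ℝ :=
  ∑ s : S, ν s * Vfun p r γ π s

/-- The first-order term `η₁(π₁, π₂)`. -/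
noncomputable def eta1 (p : A → S → S → ℝ) (r : S → A → ℝ) (γ : ℝ) (ν : S → ℝ)
    (π₁ π₂ : S → A → ℝ) : ℝ :=
  ∑ a : A, ∑ s : S, π₁ s a * Adv p r γ π₂ a s * dnu p γ ν π₂ s

/-- The higher-order remainder `η₂(π₁, π₂)`. -/
noncomputable def eta2 (p : A → S → S → ℝ) (r : S → A → ℝ) (γ : ℝ) (ν : S → ℝ)
    (π₁ π₂ : S → A → ℝ) : ℝ :=
  ∑ a : A, ∑ s : S, (π₁ s a - π₂ s a) * Adv p r γ π₂ a s *
    (dnu p γ ν π₁ s - dnu p γ ν π₂ s)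

/-- Total variation distance between two pmfs on a finite type. -/
noncomputable def DTV {X : Type} [Fintype X] (μ₁ μ₂ : X → ℝ) : ℝ :=
  (1 / 2) * ∑ x : X, |μ₁ x - μ₂ x|

/-- Kullback–Leibler divergence between two pmfs on a finite type, valued in `EReal`
(equal to `⊤` if `μ₁` is not absolutely continuous w.r.t. `μ₂`). -/
noncomputable def DKL {X : Type} [Fintype X] (μ₁ μ₂ : X → ℝ) : EReal :=
  ∑ x : X, (if μ₁ x = 0 then (0 : EReal)
    else if μ₂ x = 0 then (⊤ : EReal)
    else ((μ₁ x * Real.log (μ₁ x / μ₂ x) : ℝ) : EReal))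

/-- Conditional discounted stationary probability ratio `ω^π(a', s'; a, s)`. -/
noncomputable def ratio (p : A → S → S → ℝ) (γ : ℝ) (pinf : A → S → ℝ)
    (π : S → A → ℝ) (a' : A) (s' : S) (a : A) (s : S) : ℝ :=
  (1 - γ) * ((if a' = a ∧ s' = s then 1 else 0) +
    ∑' t : ℕ, γ ^ (t + 1) * (π s' a' * visit p π (t + 1) a s s')) / pinf a' s'

/-- Integrated discounted stationary probability ratio `ω^{π,ν}(a', s')`. -/
noncomputable def rationu (p : A → S → S → ℝ) (γ : ℝ) (pinf : A → S → ℝ) (ν : S → ℝ)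
    (π : S → A → ℝ) (a' : A) (s' : S) : ℝ :=
  ∑ a : A, ∑ s : S, π s a * ν s * ratio p γ pinf π a' s' a s

/-- Marginal state distribution `p̄_t^{π,ν}` at time `t` when `S₀ ~ ν` and actions follow `π`. -/
def marg (p : A → S → S → ℝ) (π : S → A → ℝ) (ν : S → ℝ) : ℕ → S → ℝ
  | 0, s' => ν s'
  | (t + 1), s' => ∑ s : S, marg p π ν t s * ∑ a : A, π s a * p a s s'

/-- Conditional discounted state–action visitation `q^π(a', s'; a, s)`. -/
noncomputable def qvisit (p : A → S → S → ℝ) (γ : ℝ) (π : S → A → ℝ)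
    (a' : A) (s' : S) (a : A) (s : S) : ℝ :=
  (1 - γ) * ((if a' = a ∧ s' = s then 1 else 0) +
    ∑' t : ℕ, γ ^ (t + 1) * (π s' a' * visit p π (t + 1) a s s'))

/-- The estimating function `ψ(o) = ψ₁ + ψ₂(o) + ψ₃(o)` evaluated at a data tuple
`o = (s, a, rr, s')`, for nuisance functions `Ṽ = Vt`, `Ã = At`, `ω̃ = ωt`
(with `ωt a' s' a s = ω̃(a',s'; a,s)`) and `d̃ = dt` (with `dt s* a s = d̃(s* | a, s)`). -/
noncomputable def psi (γ : ℝ) (ν : S → ℝ) (π πold : S → A → ℝ)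
    (Vt : S → ℝ) (At : A → S → ℝ) (ωt : A → S → A → S → ℝ) (dt : S → A → S → ℝ)
    (s : S) (a : A) (rr : ℝ) (s' : S) : ℝ :=
  let dtnu : S → ℝ := fun sstar => ∑ a0 : A, ∑ s0 : S, πold s0 a0 * ν s0 * dt sstar a0 s0
  let ωtnu : A → S → ℝ := fun a1 s1 => ∑ a0 : A, ∑ s0 : S, πold s0 a0 * ν s0 * ωt a1 s1 a0 s0
  (∑ sstar : S, dtnu sstar * ∑ astar : A, π sstar astar * At astar sstar)
  + (1 / (1 - γ)) * ∑ sstar : S, dtnu sstar * ∑ astar : A,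
      (π sstar astar - πold sstar astar) * ωt a s astar sstar *
        (rr + γ * Vt s' - Vt s - At a s)
  + (ωtnu a s / (1 - γ)) * ∑ astar : A,
      (γ * ∑ a' : A, πold s' a' * ∑ sstar : S, dt sstar a' s' * π sstar astar * At astar sstar
       - ∑ sstar : S, dt sstar a s * π sstar astar * At astar sstar
       + (1 - γ) * π s astar * At astar s)

/-- The expectation `E[ψ(O)]` of the estimating function, where `(A₀, S₀) ~ p_∞`,
`S₁ | (A₀, S₀) ~ p(· | A₀, S₀)` and `E[R₀ | A₀, S₀] = r(S₀, A₀)`;  since `ψ` is affine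
in its reward argument with a coefficient not depending on `s'`, this finite sum is
exactly the expectation of `ψ(O)`. -/
noncomputable def Epsi (p : A → S → S → ℝ) (r : S → A → ℝ) (γ : ℝ) (ν : S → ℝ)
    (pinf : A → S → ℝ) (π πold : S → A → ℝ)
    (Vt : S → ℝ) (At : A → S → ℝ) (ωt : A → S → A → S → ℝ) (dt : S → A → S → ℝ) : ℝ :=
  ∑ a : A, ∑ s : S, pinf a s * ∑ s' : S, p a s s' *
    psi γ ν π πold Vt At ωt dt s a (r s a) s'

section AuxLemmas
set_option linter.unusedSectionVars false

variable {p : A → S → S → ℝ} {π : S → A → ℝ} {ν : S → ℝ} {γ : ℝ}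
variable (hp : IsKernel p) (hπ : IsPolicy π) (hν : IsPMF ν)
variable (hγ0 : 0 ≤ γ) (hγ1 : γ < 1)

include hp hπ in
lemma visit_nonneg (t : ℕ) (a : A) (s s' : S) : 0 ≤ visit p π t a s s' := by
  induction t using Nat.strong_induction_on generalizing s' with
  | _ t ih =>
    match t with
    | 0 => simp only [visit]; positivity
    | 1 => exact (hp a s).1 s'
    | (t + 2) =>
      simp only [visit]
      apply Finset.sum_nonneg
      intro s'' _
      have h1 := ih (t+1) (by omega) s''
      have h2 : 0 ≤ ∑ a'' : A, π s'' a'' * p a'' s'' s' :=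
        Finset.sum_nonneg fun a'' _ => mul_nonneg ((hπ s'').1 a'') ((hp a'' s'').1 s')
      exact mul_nonneg h1 h2

include hp hπ in
lemma visit_sum_one (t : ℕ) (a : A) (s : S) : ∑ s' : S, visit p π t a s s' = 1 := by
  induction t using Nat.strong_induction_on with
  | _ t ih =>
    match t with
    | 0 => simp [visit]
    | 1 => exact (hp a s).2
    | (t + 2) =>
      simp only [visit]
      rw [Finset.sum_comm]
      have : ∀ s'' : S, ∑ s' : S, visit p π (t+1) a s s'' * ∑ a'' : A, π s'' a'' * p a'' s'' s'
          = visit p π (t+1) a s s'' := by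
        intro s''
        rw [← Finset.mul_sum, Finset.sum_comm]
        have : ∀ a'' : A, ∑ s' : S, π s'' a'' * p a'' s'' s' = π s'' a'' := by
          intro a''; rw [← Finset.mul_sum, (hp a'' s'').2, mul_one]
        simp only [this, (hπ s'').2, mul_one]
      simp only [this]
      exact ih (t+1) (by omega)

include hp hπ in
lemma visit_le_one (t : ℕ) (a : A) (s s' : S) : visit p π t a s s' ≤ 1 := by
  have h := visit_sum_one hp hπ t a s
  calc visit p π t a s s' ≤ ∑ s'' : S, visit p π t a s s'' :=
        Finset.single_le_sum (fun i _ => visit_nonneg hp hπ t a s i) (Finset.mem_univ s')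
    _ = 1 := h

include hp hπ hν in
lemma marg_nonneg (t : ℕ) (s' : S) : 0 ≤ marg p π ν t s' := by
  induction t generalizing s' with
  | zero => exact hν.1 s'
  | succ t ih =>
    simp only [marg]
    exact Finset.sum_nonneg fun s _ => mul_nonneg (ih s)
      (Finset.sum_nonneg fun a _ => mul_nonneg ((hπ s).1 a) ((hp a s).1 s'))

include hp hπ hν in
lemma marg_sum_one (t : ℕ) : ∑ s' : S, marg p π ν t s' = 1 := by
  induction t with
  | zero => exact hν.2
  | succ t ih =>
    simp only [marg]
    rw [Finset.sum_comm]
    have : ∀ s : S, ∑ s' : S, marg p π ν t s * ∑ a : A, π s a * p a s s' = marg p π ν t s := by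
      intro s
      rw [← Finset.mul_sum, Finset.sum_comm]
      have : ∀ a : A, ∑ s' : S, π s a * p a s s' = π s a := by
        intro a; rw [← Finset.mul_sum, (hp a s).2, mul_one]
      simp only [this, (hπ s).2, mul_one]
    simp only [this, ih]

include hp hπ hν in
lemma marg_le_one (t : ℕ) (s' : S) : marg p π ν t s' ≤ 1 := by
  calc marg p π ν t s' ≤ ∑ s'' : S, marg p π ν t s'' :=
        Finset.single_le_sum (fun i _ => marg_nonneg hp hπ hν t i) (Finset.mem_univ s')
    _ = 1 := marg_sum_one hp hπ hν t

include hp hπ in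
lemma sum_visit_eq_marg (t : ℕ) (s' : S) :
    ∑ s : S, ∑ a : A, π s a * ν s * visit p π t a s s' = marg p π ν t s' := by
  induction t using Nat.strong_induction_on generalizing s' with
  | _ t ih =>
    match t with
    | 0 =>
      simp only [visit, marg]
      rw [Finset.sum_eq_single s']
      · rw [if_pos rfl]
        simp only [mul_one]
        rw [← Finset.sum_mul, (hπ s').2, one_mul]
      · intro b _ hb
        rw [if_neg (Ne.symm hb)]
        simp
      · intro h; exact absurd (Finset.mem_univ s') h
    | 1 =>
      simp only [visit, marg]
      congr 1
      ext s
      rw [Finset.mul_sum]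
      congr 1
      ext a
      ring
    | (t + 2) =>
      simp only [visit]
      have hm : marg p π ν (t + 2) s' = ∑ s'' : S, marg p π ν (t+1) s''
          * ∑ a'' : A, π s'' a'' * p a'' s'' s' := rfl
      rw [hm]
      calc ∑ s : S, ∑ a : A, π s a * ν s *
              ∑ s'' : S, visit p π (t+1) a s s'' * ∑ a'' : A, π s'' a'' * p a'' s'' s'
          = ∑ s : S, ∑ a : A, ∑ s'' : S, π s a * ν s *
              (visit p π (t+1) a s s'' * ∑ a'' : A, π s'' a'' * p a'' s'' s') := by
            simp only [Finset.mul_sum]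
        _ = ∑ s : S, ∑ s'' : S, ∑ a : A, π s a * ν s *
              (visit p π (t+1) a s s'' * ∑ a'' : A, π s'' a'' * p a'' s'' s') :=
            Finset.sum_congr rfl fun s _ => Finset.sum_comm
        _ = ∑ s'' : S, ∑ s : S, ∑ a : A, π s a * ν s *
              (visit p π (t+1) a s s'' * ∑ a'' : A, π s'' a'' * p a'' s'' s') :=
            Finset.sum_comm
        _ = ∑ s'' : S, (∑ s : S, ∑ a : A, π s a * ν s * visit p π (t+1) a s s'')
              * ∑ a'' : A, π s'' a'' * p a'' s'' s' := by
            refine Finset.sum_congr rfl fun s'' _ => ?_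
            simp only [Finset.sum_mul]
            exact Finset.sum_congr rfl fun s _ =>
              Finset.sum_congr rfl fun a _ => by ring
        _ = ∑ s'' : S, marg p π ν (t+1) s'' * ∑ a'' : A, π s'' a'' * p a'' s'' s' := by
            refine Finset.sum_congr rfl fun s'' _ => ?_
            rw [ih (t+1) (by omega)]

lemma summable_of_abs_le_geom {f : ℕ → ℝ} {M : ℝ} (hγ0 : 0 ≤ γ) (hγ1 : γ < 1)
    (h : ∀ t, |f t| ≤ M * γ ^ t) : Summable f :=
  Summable.of_norm_bounded
    ((summable_geometric_of_lt_one hγ0 hγ1).mul_left M) (fun t => h t)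

include hp hπ in
lemma summable_visit (hγ0 : 0 ≤ γ) (hγ1 : γ < 1) (a : A) (s s' : S) :
    Summable (fun t : ℕ => γ ^ t * visit p π t a s s') := by
  refine summable_of_abs_le_geom hγ0 hγ1 (M := 1) (fun t => ?_)
  rw [abs_of_nonneg (mul_nonneg (pow_nonneg hγ0 t) (visit_nonneg hp hπ t a s s')), one_mul]
  exact mul_le_of_le_one_right (pow_nonneg hγ0 t) (visit_le_one hp hπ t a s s')

include hp hπ hν in
lemma summable_marg (hγ0 : 0 ≤ γ) (hγ1 : γ < 1) (s' : S) :
    Summable (fun t : ℕ => γ ^ t * marg p π ν t s') := by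
  refine summable_of_abs_le_geom hγ0 hγ1 (M := 1) (fun t => ?_)
  rw [abs_of_nonneg (mul_nonneg (pow_nonneg hγ0 t) (marg_nonneg hp hπ hν t s')), one_mul]
  exact mul_le_of_le_one_right (pow_nonneg hγ0 t) (marg_le_one hp hπ hν t s')

include hp hπ hν in
lemma dnu_eq (hγ0 : 0 ≤ γ) (hγ1 : γ < 1) (s' : S) :
    dnu p γ ν π s' = (1 - γ) * ∑' t : ℕ, γ ^ t * marg p π ν t s' := by
  unfold dnu dvisit
  have h1 : ∀ s a, π s a * ν s * ((1 - γ) * ∑' t : ℕ, γ ^ t * visit p π t a s s')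
      = (1 - γ) * ∑' t : ℕ, π s a * ν s * (γ ^ t * visit p π t a s s') := by
    intro s a; rw [tsum_mul_left]; ring
  simp only [h1, ← Finset.mul_sum]
  congr 1
  have hsumm : ∀ (s : S) (a : A),
      Summable (fun t : ℕ => π s a * ν s * (γ ^ t * visit p π t a s s')) :=
    fun s a => (summable_visit hp hπ hγ0 hγ1 a s s').mul_left _
  have h2 : ∀ s : S, ∑ a : A, ∑' t : ℕ, π s a * ν s * (γ ^ t * visit p π t a s s')
      = ∑' t : ℕ, ∑ a : A, π s a * ν s * (γ ^ t * visit p π t a s s') :=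
    fun s => (Summable.tsum_finsetSum (fun a _ => hsumm s a)).symm
  simp only [h2]
  rw [← Summable.tsum_finsetSum (fun s _ => summable_sum (fun a _ => hsumm s a))]
  refine tsum_congr (fun t => ?_)
  have h3 : ∀ (s : S) (a : A), π s a * ν s * (γ ^ t * visit p π t a s s')
      = γ ^ t * (π s a * ν s * visit p π t a s s') := fun s a => by ring
  simp only [h3, ← Finset.mul_sum]
  rw [sum_visit_eq_marg hp hπ]

include hp hπ hν in
lemma dnu_nonneg (hγ0 : 0 ≤ γ) (hγ1 : γ < 1) (s' : S) : 0 ≤ dnu p γ ν π s' := by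
  rw [dnu_eq hp hπ hν hγ0 hγ1]
  refine mul_nonneg (by linarith) (tsum_nonneg (fun t => ?_))
  exact mul_nonneg (pow_nonneg hγ0 t) (marg_nonneg hp hπ hν t s')

include hp hπ hν in
lemma dnu_ge (hγ0 : 0 ≤ γ) (hγ1 : γ < 1) (s' : S) : (1 - γ) * ν s' ≤ dnu p γ ν π s' := by
  rw [dnu_eq hp hπ hν hγ0 hγ1]
  refine mul_le_mul_of_nonneg_left ?_ (by linarith)
  have h0 : γ ^ 0 * marg p π ν 0 s' = ν s' := by simp [marg]
  rw [← h0]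
  exact Summable.le_tsum (summable_marg hp hπ hν hγ0 hγ1 s') 0
    (fun t _ => mul_nonneg (pow_nonneg hγ0 t) (marg_nonneg hp hπ hν t s'))

include hp hπ in
lemma abs_Qfun_le {r : S → A → ℝ} {Rmax : ℝ} (hγ0 : 0 ≤ γ) (hγ1 : γ < 1)
    (hr : ∀ s a, |r s a| ≤ Rmax) (a : A) (s : S) :
    |Qfun p r γ π a s| ≤ Rmax / (1 - γ) := by
  have hγ' : (0:ℝ) < 1 - γ := by linarith
  have hR : 0 ≤ Rmax := le_trans (abs_nonneg _) (hr s a)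
  have hinner : ∀ t : ℕ, |∑ s' : S, visit p π (t+1) a s s' * ∑ a' : A, π s' a' * r s' a'| ≤ Rmax := by
    intro t
    calc |∑ s' : S, visit p π (t+1) a s s' * ∑ a' : A, π s' a' * r s' a'|
        ≤ ∑ s' : S, |visit p π (t+1) a s s' * ∑ a' : A, π s' a' * r s' a'| :=
          Finset.abs_sum_le_sum_abs _ _
      _ ≤ ∑ s' : S, visit p π (t+1) a s s' * Rmax := by
          refine Finset.sum_le_sum (fun s' _ => ?_)
          rw [abs_mul, abs_of_nonneg (visit_nonneg hp hπ (t+1) a s s')]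
          refine mul_le_mul_of_nonneg_left ?_ (visit_nonneg hp hπ (t+1) a s s')
          calc |∑ a' : A, π s' a' * r s' a'| ≤ ∑ a' : A, |π s' a' * r s' a'| :=
                Finset.abs_sum_le_sum_abs _ _
            _ ≤ ∑ a' : A, π s' a' * Rmax := by
                refine Finset.sum_le_sum (fun a' _ => ?_)
                rw [abs_mul, abs_of_nonneg ((hπ s').1 a')]
                exact mul_le_mul_of_nonneg_left (hr s' a') ((hπ s').1 a')
            _ = Rmax := by rw [← Finset.sum_mul, (hπ s').2, one_mul]
      _ = Rmax := by rw [← Finset.sum_mul, visit_sum_one hp hπ, one_mul]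
  have hgs : HasSum (fun t : ℕ => Rmax * γ * γ ^ t) (Rmax * γ * (1 - γ)⁻¹) :=
    (hasSum_geometric_of_lt_one hγ0 hγ1).mul_left _
  have htail : |∑' t : ℕ, γ ^ (t+1) *
      ∑ s' : S, visit p π (t+1) a s s' * ∑ a' : A, π s' a' * r s' a'| ≤ Rmax * γ * (1 - γ)⁻¹ := by
    rw [← Real.norm_eq_abs]
    refine tsum_of_norm_bounded hgs (fun t => ?_)
    rw [Real.norm_eq_abs, abs_mul, abs_of_nonneg (pow_nonneg hγ0 (t+1))]
    calc γ ^ (t+1) * |∑ s' : S, visit p π (t+1) a s s' * ∑ a' : A, π s' a' * r s' a'|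
        ≤ γ ^ (t+1) * Rmax := mul_le_mul_of_nonneg_left (hinner t) (pow_nonneg hγ0 (t+1))
      _ = Rmax * γ * γ ^ t := by ring
  calc |Qfun p r γ π a s| ≤ |r s a| + |∑' t : ℕ, γ ^ (t+1) *
        ∑ s' : S, visit p π (t+1) a s s' * ∑ a' : A, π s' a' * r s' a'| := abs_add_le _ _
    _ ≤ Rmax + Rmax * γ * (1 - γ)⁻¹ := add_le_add (hr s a) htail
    _ = Rmax / (1 - γ) := by field_simp; ring

include hp hπ in
lemma abs_Adv_le {r : S → A → ℝ} {Rmax : ℝ} (hγ0 : 0 ≤ γ) (hγ1 : γ < 1)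
    (hr : ∀ s a, |r s a| ≤ Rmax) (a : A) (s : S) :
    |Adv p r γ π a s| ≤ 2 * Rmax / (1 - γ) := by
  have hV : |Vfun p r γ π s| ≤ Rmax / (1 - γ) := by
    unfold Vfun
    calc |∑ a' : A, π s a' * Qfun p r γ π a' s| ≤ ∑ a' : A, |π s a' * Qfun p r γ π a' s| :=
          Finset.abs_sum_le_sum_abs _ _
      _ ≤ ∑ a' : A, π s a' * (Rmax / (1 - γ)) := by
          refine Finset.sum_le_sum (fun a' _ => ?_)
          rw [abs_mul, abs_of_nonneg ((hπ s).1 a')]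
          exact mul_le_mul_of_nonneg_left (abs_Qfun_le hp hπ hγ0 hγ1 hr a' s) ((hπ s).1 a')
      _ = Rmax / (1 - γ) := by rw [← Finset.sum_mul, (hπ s).2, one_mul]
  calc |Adv p r γ π a s| ≤ |Qfun p r γ π a s| + |Vfun p r γ π s| := abs_sub _ _
    _ ≤ Rmax / (1 - γ) + Rmax / (1 - γ) :=
        add_le_add (abs_Qfun_le hp hπ hγ0 hγ1 hr a s) hV
    _ = 2 * Rmax / (1 - γ) := by ring

include hp hν in
lemma marg_diff [Nonempty S] {πo πn : S → A → ℝ} {M : ℝ} (hπo : IsPolicy πo) (hπn : IsPolicy πn)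
    (hM : ∀ s, ∑ a : A, |πn s a - πo s a| ≤ M) (t : ℕ) :
    ∑ s' : S, |marg p πn ν t s' - marg p πo ν t s'| ≤ t * M := by
  induction t with
  | zero => simp [marg]
  | succ t ih =>
    have hKsum : ∀ s : S, ∑ s' : S, ∑ a : A, πn s a * p a s s' = 1 := by
      intro s
      rw [Finset.sum_comm]
      have : ∀ a : A, ∑ s' : S, πn s a * p a s s' = πn s a := by
        intro a; rw [← Finset.mul_sum, (hp a s).2, mul_one]
      simp only [this, (hπn s).2]
    have hKnonneg : ∀ s s' : S, 0 ≤ ∑ a : A, πn s a * p a s s' :=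
      fun s s' => Finset.sum_nonneg fun a _ => mul_nonneg ((hπn s).1 a) ((hp a s).1 s')
    have hΔK : ∀ s : S, ∑ s' : S,
        |∑ a : A, πn s a * p a s s' - ∑ a : A, πo s a * p a s s'| ≤ M := by
      intro s
      calc ∑ s' : S, |∑ a : A, πn s a * p a s s' - ∑ a : A, πo s a * p a s s'|
          = ∑ s' : S, |∑ a : A, (πn s a - πo s a) * p a s s'| := by
            refine Finset.sum_congr rfl fun s' _ => ?_
            rw [← Finset.sum_sub_distrib]
            congr 1
            exact Finset.sum_congr rfl fun a _ => by ring
        _ ≤ ∑ s' : S, ∑ a : A, |πn s a - πo s a| * p a s s' := by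
            refine Finset.sum_le_sum fun s' _ => le_trans (Finset.abs_sum_le_sum_abs _ _)
              (Finset.sum_le_sum fun a _ => ?_)
            rw [abs_mul, abs_of_nonneg ((hp a s).1 s')]
        _ = ∑ a : A, |πn s a - πo s a| := by
            rw [Finset.sum_comm]
            refine Finset.sum_congr rfl fun a _ => ?_
            rw [← Finset.mul_sum, (hp a s).2, mul_one]
        _ ≤ M := hM s
    have key : ∑ s' : S, |marg p πn ν (t+1) s' - marg p πo ν (t+1) s'| ≤
        ∑ s : S, |marg p πn ν t s - marg p πo ν t s| *
          (∑ s' : S, ∑ a : A, πn s a * p a s s') +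
        ∑ s : S, marg p πo ν t s *
          (∑ s' : S, |∑ a : A, πn s a * p a s s' - ∑ a : A, πo s a * p a s s'|) := by
      have expand : ∀ s' : S, marg p πn ν (t+1) s' - marg p πo ν (t+1) s' =
          ∑ s : S, ((marg p πn ν t s - marg p πo ν t s) * (∑ a : A, πn s a * p a s s') +
            marg p πo ν t s * ((∑ a : A, πn s a * p a s s') - ∑ a : A, πo s a * p a s s')) := by
        intro s'
        show (∑ s : S, marg p πn ν t s * ∑ a : A, πn s a * p a s s') -
             (∑ s : S, marg p πo ν t s * ∑ a : A, πo s a * p a s s') = _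
        rw [← Finset.sum_sub_distrib]
        exact Finset.sum_congr rfl fun s _ => by ring
      calc ∑ s' : S, |marg p πn ν (t+1) s' - marg p πo ν (t+1) s'|
          ≤ ∑ s' : S, ∑ s : S,
              (|marg p πn ν t s - marg p πo ν t s| * (∑ a : A, πn s a * p a s s') +
               marg p πo ν t s *
                 |(∑ a : A, πn s a * p a s s') - ∑ a : A, πo s a * p a s s'|) := by
            refine Finset.sum_le_sum fun s' _ => ?_
            rw [expand s']
            refine le_trans (Finset.abs_sum_le_sum_abs _ _)
              (Finset.sum_le_sum fun s _ => ?_)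
            calc |(marg p πn ν t s - marg p πo ν t s) * (∑ a : A, πn s a * p a s s') +
                  marg p πo ν t s * ((∑ a : A, πn s a * p a s s') - ∑ a : A, πo s a * p a s s')|
                ≤ |(marg p πn ν t s - marg p πo ν t s) * (∑ a : A, πn s a * p a s s')| +
                  |marg p πo ν t s * ((∑ a : A, πn s a * p a s s') - ∑ a : A, πo s a * p a s s')| :=
                  abs_add_le _ _
              _ = |marg p πn ν t s - marg p πo ν t s| * (∑ a : A, πn s a * p a s s') +
                  marg p πo ν t s *
                    |(∑ a : A, πn s a * p a s s') - ∑ a : A, πo s a * p a s s'| := by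
                  rw [abs_mul, abs_mul, abs_of_nonneg (hKnonneg s s'),
                    abs_of_nonneg (marg_nonneg hp hπo hν t s)]
        _ = _ := by
            rw [Finset.sum_comm]
            simp only [Finset.sum_add_distrib, ← Finset.mul_sum]
    have hMnn : 0 ≤ M := le_trans (Finset.sum_nonneg fun a _ => abs_nonneg _)
      (hM (Classical.arbitrary S))
    calc ∑ s' : S, |marg p πn ν (t+1) s' - marg p πo ν (t+1) s'|
        ≤ ∑ s : S, |marg p πn ν t s - marg p πo ν t s| *
            (∑ s' : S, ∑ a : A, πn s a * p a s s') +
          ∑ s : S, marg p πo ν t s *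
            (∑ s' : S, |∑ a : A, πn s a * p a s s' - ∑ a : A, πo s a * p a s s'|) := key
      _ ≤ (t * M) + M := by
          refine add_le_add ?_ ?_
          · calc ∑ s : S, |marg p πn ν t s - marg p πo ν t s| *
                  (∑ s' : S, ∑ a : A, πn s a * p a s s')
                = ∑ s : S, |marg p πn ν t s - marg p πo ν t s| := by
                  refine Finset.sum_congr rfl fun s _ => ?_
                  rw [hKsum s, mul_one]
              _ ≤ t * M := ih
          · calc ∑ s : S, marg p πo ν t s *
                  (∑ s' : S, |∑ a : A, πn s a * p a s s' - ∑ a : A, πo s a * p a s s'|)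
                ≤ ∑ s : S, marg p πo ν t s * M :=
                  Finset.sum_le_sum fun s _ =>
                    mul_le_mul_of_nonneg_left (hΔK s) (marg_nonneg hp hπo hν t s)
              _ = M := by rw [← Finset.sum_mul, marg_sum_one hp hπo hν, one_mul]
      _ = (t + 1 : ℕ) * M := by push_cast; ring

include hp hν in
lemma dnu_diff [Nonempty S] {πo πn : S → A → ℝ} {M : ℝ} (hγ0 : 0 ≤ γ) (hγ1 : γ < 1)
    (hπo : IsPolicy πo) (hπn : IsPolicy πn)
    (hM : ∀ s, ∑ a : A, |πn s a - πo s a| ≤ M) :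
    ∑ s' : S, |dnu p γ ν πn s' - dnu p γ ν πo s'| ≤ M * (γ / (1 - γ)) := by
  have hγ' : (0:ℝ) < 1 - γ := by linarith
  have hnorm : ‖γ‖ < 1 := by rw [Real.norm_eq_abs, abs_of_nonneg hγ0]; exact hγ1
  have habse : ∀ (t : ℕ) (s' : S), |marg p πn ν t s' - marg p πo ν t s'| ≤ 2 := by
    intro t s'
    calc |marg p πn ν t s' - marg p πo ν t s'|
        ≤ |marg p πn ν t s'| + |marg p πo ν t s'| := abs_sub _ _
      _ ≤ 1 + 1 := add_le_add
          (by rw [abs_of_nonneg (marg_nonneg hp hπn hν t s')]; exact marg_le_one hp hπn hν t s')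
          (by rw [abs_of_nonneg (marg_nonneg hp hπo hν t s')]; exact marg_le_one hp hπo hν t s')
      _ = 2 := by norm_num
  have hesum : ∀ s' : S,
      Summable (fun t : ℕ => γ ^ t * |marg p πn ν t s' - marg p πo ν t s'|) := by
    intro s'
    refine summable_of_abs_le_geom hγ0 hγ1 (M := 2) (fun t => ?_)
    rw [abs_of_nonneg (mul_nonneg (pow_nonneg hγ0 t) (abs_nonneg _))]
    calc γ ^ t * |marg p πn ν t s' - marg p πo ν t s'| ≤ γ ^ t * 2 :=
          mul_le_mul_of_nonneg_left (habse t s') (pow_nonneg hγ0 t)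
      _ = 2 * γ ^ t := by ring
  have stepA : ∀ s' : S, |dnu p γ ν πn s' - dnu p γ ν πo s'| ≤
      (1 - γ) * ∑' t : ℕ, γ ^ t * |marg p πn ν t s' - marg p πo ν t s'| := by
    intro s'
    rw [dnu_eq hp hπn hν hγ0 hγ1, dnu_eq hp hπo hν hγ0 hγ1, ← mul_sub,
      ← Summable.tsum_sub (summable_marg hp hπn hν hγ0 hγ1 s') (summable_marg hp hπo hν hγ0 hγ1 s'),
      abs_mul, abs_of_nonneg (le_of_lt hγ')]
    refine mul_le_mul_of_nonneg_left ?_ (le_of_lt hγ')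
    rw [← Real.norm_eq_abs]
    refine tsum_of_norm_bounded (hesum s').hasSum (fun t => ?_)
    rw [Real.norm_eq_abs, ← mul_sub, abs_mul, abs_of_nonneg (pow_nonneg hγ0 t)]
  have hsR : Summable (fun t : ℕ => γ ^ t * ((t : ℝ) * M)) := by
    have : (fun t : ℕ => γ ^ t * ((t : ℝ) * M)) = fun t : ℕ => M * ((t : ℝ) ^ 1 * γ ^ t) :=
      funext fun t => by ring
    rw [this]
    exact (summable_pow_mul_geometric_of_norm_lt_one 1 hnorm).mul_left M
  calc ∑ s' : S, |dnu p γ ν πn s' - dnu p γ ν πo s'|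
      ≤ ∑ s' : S, (1 - γ) * ∑' t : ℕ, γ ^ t * |marg p πn ν t s' - marg p πo ν t s'| :=
        Finset.sum_le_sum fun s' _ => stepA s'
    _ = (1 - γ) * ∑' t : ℕ, ∑ s' : S, γ ^ t * |marg p πn ν t s' - marg p πo ν t s'| := by
        rw [← Finset.mul_sum, Summable.tsum_finsetSum (fun s' _ => hesum s')]
    _ ≤ (1 - γ) * ∑' t : ℕ, γ ^ t * ((t : ℝ) * M) := by
        refine mul_le_mul_of_nonneg_left
          (Summable.tsum_le_tsum (fun t => ?_) (summable_sum (fun s' _ => hesum s')) hsR)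
          (le_of_lt hγ')
        rw [← Finset.mul_sum]
        exact mul_le_mul_of_nonneg_left (marg_diff hp hν hπo hπn hM t) (pow_nonneg hγ0 t)
    _ = (1 - γ) * (M * (γ / (1 - γ) ^ 2)) := by
        congr 1
        have : (fun t : ℕ => γ ^ t * ((t : ℝ) * M)) = fun t : ℕ => M * ((t : ℝ) * γ ^ t) :=
          funext fun t => by ring
        rw [this, tsum_mul_left, tsum_coe_mul_geometric_of_norm_lt_one hnorm]
    _ = M * (γ / (1 - γ)) := by field_simp

end AuxLemmas
theorem remainder_tv_bound (γ Rmax C : ℝ)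
    (hγ0 : 0 ≤ γ) (hγ1 : γ < 1) (hR : 0 ≤ Rmax) (hC : 0 < C) :
    ∃ cstar : ℝ, 0 < cstar ∧
      ∀ (S A : Type) [Fintype S] [Fintype A] [DecidableEq S] [DecidableEq A]
        [Nonempty S] [Nonempty A],
      ∀ (p : A → S → S → ℝ) (r : S → A → ℝ) (ν : S → ℝ),
        IsKernel p → (∀ s a, |r s a| ≤ Rmax) → IsPMF ν → (∀ s, C ≤ ν s) →
      ∀ (πold πnew : S → A → ℝ), IsPolicy πold → IsPolicy πnew →
        |eta2 p r γ ν πnew πold| ≤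
          cstar * γ / (1 - γ) *
            (∑ s : S, dnu p γ ν πold s * DTV (πold s) (πnew s)) ^ 2 := by
  have hγ' : (0:ℝ) < 1 - γ := by linarith
  refine ⟨8 * (Rmax + 1) / ((1 - γ) ^ 3 * C ^ 2), by positivity, ?_⟩
  intro S A _ _ _ _ _ _ p r ν hp hr hν hνC πold πnew hπo hπn
  set T := ∑ s : S, dnu p γ ν πold s * DTV (πold s) (πnew s) with hTdef
  have hDTVnn : ∀ s : S, 0 ≤ DTV (πold s) (πnew s) := fun s => by
    unfold DTV; positivity
  have hTnn : 0 ≤ T :=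
    Finset.sum_nonneg fun s _ =>
      mul_nonneg (dnu_nonneg hp hπo hν hγ0 hγ1 s) (hDTVnn s)
  set M := 2 * T / ((1 - γ) * C) with hMdef
  have hMnn : 0 ≤ M := div_nonneg (by linarith) (by positivity)
  have hM : ∀ s : S, ∑ a : A, |πnew s a - πold s a| ≤ M := by
    intro s
    have h1 : ∑ a : A, |πnew s a - πold s a| = 2 * DTV (πold s) (πnew s) := by
      unfold DTV
      have hcomm : ∀ a : A, |πnew s a - πold s a| = |πold s a - πnew s a| :=
        fun a => abs_sub_comm _ _
      simp only [hcomm]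
      ring
    have h2 : dnu p γ ν πold s * DTV (πold s) (πnew s) ≤ T :=
      Finset.single_le_sum
        (f := fun s => dnu p γ ν πold s * DTV (πold s) (πnew s))
        (fun i _ => mul_nonneg (dnu_nonneg hp hπo hν hγ0 hγ1 i) (hDTVnn i))
        (Finset.mem_univ s)
    have h3 : (1 - γ) * C ≤ dnu p γ ν πold s :=
      le_trans (mul_le_mul_of_nonneg_left (hνC s) (le_of_lt hγ'))
        (dnu_ge hp hπo hν hγ0 hγ1 s)
    have h4 : ((1 - γ) * C) * DTV (πold s) (πnew s) ≤ T :=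
      le_trans (mul_le_mul_of_nonneg_right h3 (hDTVnn s)) h2
    rw [h1, hMdef, le_div_iff₀ (by positivity)]
    nlinarith [h4]
  have hD := dnu_diff hp hν hγ0 hγ1 hπo hπn hM
  have hB : (0:ℝ) ≤ 2 * Rmax / (1 - γ) := by positivity
  have main : |eta2 p r γ ν πnew πold| ≤ (2 * Rmax / (1 - γ)) * M * (M * (γ / (1 - γ))) := by
    calc |eta2 p r γ ν πnew πold|
        ≤ ∑ a : A, ∑ s : S, |(πnew s a - πold s a) * Adv p r γ πold a s *
            (dnu p γ ν πnew s - dnu p γ ν πold s)| := by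
          unfold eta2
          refine le_trans (Finset.abs_sum_le_sum_abs _ _)
            (Finset.sum_le_sum fun a _ => Finset.abs_sum_le_sum_abs _ _)
      _ ≤ ∑ a : A, ∑ s : S, (2 * Rmax / (1 - γ)) *
            (|πnew s a - πold s a| * |dnu p γ ν πnew s - dnu p γ ν πold s|) := by
          refine Finset.sum_le_sum fun a _ => Finset.sum_le_sum fun s _ => ?_
          rw [abs_mul, abs_mul]
          calc |πnew s a - πold s a| * |Adv p r γ πold a s| *
                |dnu p γ ν πnew s - dnu p γ ν πold s|
              ≤ |πnew s a - πold s a| * (2 * Rmax / (1 - γ)) *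
                |dnu p γ ν πnew s - dnu p γ ν πold s| :=
                mul_le_mul_of_nonneg_right
                  (mul_le_mul_of_nonneg_left (abs_Adv_le hp hπo hγ0 hγ1 hr a s)
                    (abs_nonneg _)) (abs_nonneg _)
            _ = (2 * Rmax / (1 - γ)) *
                (|πnew s a - πold s a| * |dnu p γ ν πnew s - dnu p γ ν πold s|) := by ring
      _ = (2 * Rmax / (1 - γ)) * ∑ s : S, (∑ a : A, |πnew s a - πold s a|) *
            |dnu p γ ν πnew s - dnu p γ ν πold s| := by
          rw [Finset.sum_comm, Finset.mul_sum]
          refine Finset.sum_congr rfl fun s _ => ?_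
          rw [← Finset.mul_sum, ← Finset.sum_mul]
      _ ≤ (2 * Rmax / (1 - γ)) * ∑ s : S, M * |dnu p γ ν πnew s - dnu p γ ν πold s| :=
          mul_le_mul_of_nonneg_left
            (Finset.sum_le_sum fun s _ => mul_le_mul_of_nonneg_right (hM s) (abs_nonneg _)) hB
      _ = (2 * Rmax / (1 - γ)) * M * ∑ s : S, |dnu p γ ν πnew s - dnu p γ ν πold s| := by
          rw [← Finset.mul_sum]; ring
      _ ≤ (2 * Rmax / (1 - γ)) * M * (M * (γ / (1 - γ))) :=
          mul_le_mul_of_nonneg_left hD (mul_nonneg hB hMnn)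
  refine le_trans main ?_
  have lhs_eq : (2 * Rmax / (1 - γ)) * M * (M * (γ / (1 - γ)))
      = 8 * Rmax * γ * T ^ 2 / ((1 - γ) ^ 4 * C ^ 2) := by
    rw [hMdef]; field_simp; ring
  have rhs_eq : 8 * (Rmax + 1) / ((1 - γ) ^ 3 * C ^ 2) * γ / (1 - γ) * T ^ 2
      = 8 * (Rmax + 1) * γ * T ^ 2 / ((1 - γ) ^ 4 * C ^ 2) := by
    field_simp
    try (left; trivial)
  rw [lhs_eq, rhs_eq, div_le_div_iff_of_pos_right (by positivity)]
  nlinarith [mul_nonneg hγ0 (sq_nonneg T)]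

end VEPO
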